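/- For any M ≥ 0 there exists a constant c > 0 such that for all sufficiently large n: for any set F of edges of the complete graph K_n, if γ^ID(K_n \ F) ≤ M·log n then |F| ≥ c·n·log n. -/

import Mathlib

def closedNbr {V : Type*} (G : SimpleGraph V) (v : V) : Set V := insert v (G.neighborSet v)

def Dominating {V : Type*} (G : SimpleGraph V) (C : Set V) : Prop :=
  ∀ v ∉ C, ∃ c ∈ C, G.Adj v c

def Separating {V : Type*} (G : SimpleGraph V) (C : Set V) : Prop :=
  ∀ u v : V, u ≠ v → closedNbr G u ∩ C ≠ closedNbr G v ∩ C

def IsIdCode {V : Type*} (G : SimpleGraph V) (C : Set V) : Prop :=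
  Dominating G C ∧ Separating G C

set_option maxHeartbeats 1600000 in
theorem stmt11 (M : ℝ) (hM : 0 ≤ M) :
    ∃ c : ℝ, 0 < c ∧ ∃ N : ℕ, ∀ n ≥ N, ∀ F : Set (Sym2 (Fin n)),
      F ⊆ (⊤ : SimpleGraph (Fin n)).edgeSet →
      (∃ C : Set (Fin n),
        IsIdCode ((⊤ : SimpleGraph (Fin n)).deleteEdges F) C ∧
        (C.ncard : ℝ) ≤ M * Real.log n) →
      c * n * Real.log n ≤ (F.ncard : ℝ) := by
  classical
  set q : ℝ := 8 * M + 8 with hqdef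
  have hq8 : (8:ℝ) ≤ q := by nlinarith
  have hq0 : (0:ℝ) < q := by linarith
  have hq1 : (1:ℝ) < q := by linarith
  have hlogq : 0 < Real.log q := Real.log_pos hq1
  set ε : ℝ := 1 / (8 * Real.log q) with hεdef
  have hε : 0 < ε := by positivity
  refine ⟨ε / 2, by positivity, ?_⟩
  have hlog : Filter.Tendsto (fun n : ℕ => Real.log n) Filter.atTop Filter.atTop :=
    Real.tendsto_log_atTop.comp tendsto_natCast_atTop_atTop
  have h1 := hlog.eventually_ge_atTop 1
  have h2 := hlog.eventually_ge_atTop (4 * Real.log q)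
  have h3 : ∀ᶠ n : ℕ in Filter.atTop, M * Real.log n + Real.sqrt n ≤ (n:ℝ)/2 := by
    filter_upwards [Filter.eventually_ge_atTop (⌈(4*M+2)^2⌉₊)] with n hn
    have hn0 : (0:ℝ) ≤ (n:ℝ) := Nat.cast_nonneg n
    have hs2 : (4*M+2)^2 ≤ (n:ℝ) := by
      calc (4*M+2)^2 ≤ (⌈(4*M+2)^2⌉₊ : ℝ) := Nat.le_ceil _
        _ ≤ (n:ℝ) := by exact_mod_cast hn
    have hs : 4*M+2 ≤ Real.sqrt n := by
      rw [show (4*M+2 : ℝ) = Real.sqrt ((4*M+2)^2) from (Real.sqrt_sq (by linarith)).symm]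
      exact Real.sqrt_le_sqrt hs2
    have hsqpos : 0 < Real.sqrt n := by linarith
    have hlog2 : Real.log n ≤ 2 * Real.sqrt n := by
      have h := Real.log_le_sub_one_of_pos hsqpos
      have hls := Real.log_sqrt hn0
      linarith
    have hss : Real.sqrt n * Real.sqrt n = (n:ℝ) := Real.mul_self_sqrt hn0
    have e1 : M * Real.log n ≤ 2*M*Real.sqrt n := by nlinarith [mul_le_mul_of_nonneg_left hlog2 hM]
    have e2 : (4*M+2) * Real.sqrt n ≤ (n:ℝ) := by nlinarith [mul_le_mul_of_nonneg_right hs hsqpos.le]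
    nlinarith
  obtain ⟨N, hN⟩ := Filter.eventually_atTop.mp (h1.and (h2.and h3))
  refine ⟨N, ?_⟩
  rintro n hn F hF ⟨C, ⟨-, hsep⟩, hCcard⟩
  obtain ⟨hlog1, hlog4q, hMn⟩ := hN n hn
  have hlogn0 : (0:ℝ) < Real.log n := by linarith
  have hn1 : (1:ℝ) < (n:ℝ) := by
    by_contra h
    push_neg at h
    have := Real.log_nonpos (Nat.cast_nonneg n) h
    linarith
  have hC : C.Finite := Set.toFinite C
  set C' : Finset (Fin n) := hC.toFinset with hC'def
  have hmemC' : ∀ c, c ∈ C' ↔ c ∈ C := fun c => hC.mem_toFinset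
  have hk : (C'.card : ℝ) ≤ M * Real.log n := by
    rw [← Set.ncard_eq_toFinset_card C hC]
    exact hCcard
  set G := (⊤ : SimpleGraph (Fin n)).deleteEdges F with hGdef
  set D : Fin n → Finset (Fin n) := fun v => C'.filter (fun c => s(v,c) ∈ F) with hDdef
  -- trace identity
  have htrace : ∀ v, v ∉ C → closedNbr G v ∩ C = (↑(C' \ D v) : Set (Fin n)) := by
    intro v hv
    ext c
    simp only [closedNbr, Set.mem_inter_iff, Set.mem_insert_iff, SimpleGraph.mem_neighborSet,
      hGdef, SimpleGraph.deleteEdges_adj, SimpleGraph.top_adj, Finset.coe_sdiff, Set.mem_diff,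
      Finset.mem_coe, hDdef, Finset.mem_filter, hmemC']
    constructor
    · rintro ⟨(rfl | ⟨hne, hnF⟩), hcC⟩
      · exact absurd hcC hv
      · exact ⟨hcC, fun h => hnF h.2⟩
    · rintro ⟨hcC, hnd⟩
      have hne : v ≠ c := fun h => hv (h ▸ hcC)
      exact ⟨Or.inr ⟨hne, fun h => hnd ⟨hcC, h⟩⟩, hcC⟩
  -- injectivity of D outside C
  have hDinj : ∀ u ∈ Finset.univ \ C', ∀ v ∈ Finset.univ \ C', D u = D v → u = v := by
    intro u hu v hv h
    by_contra hne
    apply hsep u v hne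
    have hu' : u ∉ C := fun hc => (Finset.mem_sdiff.mp hu).2 ((hmemC' u).mpr hc)
    have hv' : v ∉ C := fun hc => (Finset.mem_sdiff.mp hv).2 ((hmemC' v).mpr hc)
    rw [htrace u hu', htrace v hv', h]
  -- edge counting
  have hFfin : F.Finite := Set.toFinite F
  set F' : Finset (Sym2 (Fin n)) := hFfin.toFinset with hF'def
  have hFcard : (F.ncard : ℝ) = (F'.card : ℝ) := by rw [Set.ncard_eq_toFinset_card F hFfin]
  set E : Fin n → Finset (Sym2 (Fin n)) := fun v => (D v).image (fun c => s(v,c)) with hEdef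
  have hEcard : ∀ v ∈ Finset.univ \ C', (E v).card = (D v).card := by
    intro v hv
    apply Finset.card_image_of_injOn
    intro c hc c' hc' hcc
    rcases (Sym2.mk_eq_mk_iff (p := (v, c)) (q := (v, c'))).mp hcc with h | h
    · exact (Prod.ext_iff.mp h).2
    · exfalso
      have hvc : v = c' := (Prod.ext_iff.mp h).1
      have : c' ∈ C' := (Finset.mem_filter.mp hc').1
      exact (Finset.mem_sdiff.mp hv).2 (hvc ▸ this)
  have hdisj : ∀ u ∈ Finset.univ \ C', ∀ v ∈ Finset.univ \ C', u ≠ v → Disjoint (E u) (E v) := by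
    intro u hu v hv huv
    rw [Finset.disjoint_left]
    intro e heu hev
    obtain ⟨c, hc, rfl⟩ := Finset.mem_image.mp heu
    obtain ⟨c', hc', he⟩ := Finset.mem_image.mp hev
    rcases (Sym2.mk_eq_mk_iff (p := (v, c')) (q := (u, c))).mp he with h | h
    · exact huv ((Prod.ext_iff.mp h).1).symm
    · have hvc : v = c := (Prod.ext_iff.mp h).1
      have : c ∈ C' := (Finset.mem_filter.mp hc).1
      exact (Finset.mem_sdiff.mp hv).2 (hvc ▸ this)
  have hsub : (Finset.univ \ C').biUnion E ⊆ F' := by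
    intro e he
    obtain ⟨v, hv, hev⟩ := Finset.mem_biUnion.mp he
    obtain ⟨c, hc, rfl⟩ := Finset.mem_image.mp hev
    rw [hF'def, Set.Finite.mem_toFinset]
    exact (Finset.mem_filter.mp hc).2
  have hsumF : ∑ v ∈ Finset.univ \ C', (D v).card ≤ F'.card := by
    calc ∑ v ∈ Finset.univ \ C', (D v).card
        = ∑ v ∈ Finset.univ \ C', (E v).card :=
          Finset.sum_congr rfl (fun v hv => (hEcard v hv).symm)
      _ = ((Finset.univ \ C').biUnion E).card := (Finset.card_biUnion hdisj).symm
      _ ≤ F'.card := Finset.card_le_card hsub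
  -- weighted counting
  set t : ℕ := ⌈ε * Real.log n⌉₊ with htdef
  have ht1 : 1 ≤ t := Nat.one_le_iff_ne_zero.mpr (by
    intro h
    have := Nat.ceil_eq_zero.mp h
    nlinarith)
  set x : ℝ := 1/q with hxdef
  have hx0 : 0 < x := by positivity
  have hx1 : x ≤ 1 := by rw [hxdef, div_le_one hq0]; linarith
  set Small := (Finset.univ \ C').filter (fun v => (D v).card < t) with hSdef
  have hsmall_sum : (Small.card : ℝ) * x^(t-1) ≤ ∑ v ∈ Small, x^((D v).card) := by
    have h := Finset.card_nsmul_le_sum Small (fun v => x^((D v).card)) (x^(t-1))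
      (fun v hv => pow_le_pow_of_le_one hx0.le hx1
        (Nat.le_sub_one_of_lt (Finset.mem_filter.mp hv).2))
    rwa [nsmul_eq_mul] at h
  have hsum_pow : ∑ v ∈ Small, x^((D v).card) ≤ (1+x)^(C'.card) := by
    have himg : ∑ v ∈ Small, x^((D v).card) = ∑ S ∈ Small.image D, x^(S.card) := by
      rw [Finset.sum_image]
      intro u hu v hv h
      exact hDinj u (Finset.mem_of_mem_filter u hu) v (Finset.mem_of_mem_filter v hv) h
    rw [himg]
    have hsub2 : Small.image D ⊆ C'.powerset := by
      intro S hS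
      obtain ⟨v, hv, rfl⟩ := Finset.mem_image.mp hS
      exact Finset.mem_powerset.mpr (Finset.filter_subset _ _)
    calc ∑ S ∈ Small.image D, x^(S.card)
        ≤ ∑ S ∈ C'.powerset, x^(S.card) :=
          Finset.sum_le_sum_of_subset_of_nonneg hsub2 (fun _ _ _ => by positivity)
      _ = (1+x)^(C'.card) := by
          have h := Finset.prod_add (fun _ : Fin n => x) (fun _ : Fin n => (1:ℝ)) C'
          simp only [Finset.prod_const, one_pow, mul_one] at h
          rw [← h, add_comm]
  have hsmall : (Small.card : ℝ) ≤ Real.sqrt n := by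
    have hxq : x * q = 1 := by rw [hxdef]; field_simp
    have hstep : (Small.card : ℝ) ≤ (1+x)^(C'.card) * q^(t-1) := by
      have h := mul_le_mul_of_nonneg_right (hsmall_sum.trans hsum_pow) (pow_nonneg hq0.le (t-1))
      have hone : x^(t-1) * q^(t-1) = 1 := by rw [← mul_pow, hxq, one_pow]
      calc (Small.card : ℝ) = (Small.card : ℝ) * (x^(t-1) * q^(t-1)) := by rw [hone, mul_one]
        _ = (Small.card : ℝ) * x^(t-1) * q^(t-1) := by ring
        _ ≤ (1+x)^(C'.card) * q^(t-1) := h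
    have hexp1 : (1+x)^(C'.card) ≤ Real.exp ((C'.card : ℝ) * x) := by
      calc (1+x)^(C'.card) ≤ (Real.exp x)^(C'.card) :=
            pow_le_pow_left₀ (by linarith) (by linarith [Real.add_one_le_exp x]) _
        _ = Real.exp ((C'.card : ℝ) * x) := (Real.exp_nat_mul x _).symm
    have hexp2 : q^(t-1) ≤ Real.exp ((t : ℝ) * Real.log q) := by
      have : q^(t-1) ≤ q^t := pow_le_pow_right₀ hq1.le (Nat.sub_le t 1)
      calc q^(t-1) ≤ q^t := this
        _ = (Real.exp (Real.log q))^t := by rw [Real.exp_log hq0]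
        _ = Real.exp ((t : ℝ) * Real.log q) := (Real.exp_nat_mul _ t).symm
    have hkx : (C'.card : ℝ) * x ≤ Real.log n / 8 := by
      have h1 : (C'.card : ℝ) * x ≤ M * Real.log n * x :=
        mul_le_mul_of_nonneg_right hk hx0.le
      have h2 : M * Real.log n * x ≤ Real.log n / 8 := by
        rw [hxdef, show M * Real.log n * (1/q) = M * Real.log n / q from by ring,
          div_le_div_iff₀ hq0 (by norm_num : (0:ℝ) < 8)]
        nlinarith [hlogn0.le]
      linarith
    have htlogq : (t : ℝ) * Real.log q ≤ Real.log n / 8 + Real.log n / 4 := by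
      have ht_ub : (t : ℝ) ≤ ε * Real.log n + 1 :=
        le_of_lt (Nat.ceil_lt_add_one (by positivity))
      have hεq : ε * Real.log q = 1/8 := by
        rw [hεdef]; field_simp
      have := mul_le_mul_of_nonneg_right ht_ub hlogq.le
      calc (t : ℝ) * Real.log q ≤ (ε * Real.log n + 1) * Real.log q := this
        _ = (ε * Real.log q) * Real.log n + Real.log q := by ring
        _ = Real.log n / 8 + Real.log q := by rw [hεq]; ring
        _ ≤ Real.log n / 8 + Real.log n / 4 := by linarith
    have hmono : Real.exp ((C'.card : ℝ) * x) * Real.exp ((t : ℝ) * Real.log q)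
        ≤ Real.exp (Real.log n / 2) := by
      rw [← Real.exp_add]
      apply Real.exp_le_exp.mpr
      linarith
    have hsqrt : Real.exp (Real.log n / 2) = Real.sqrt n := by
      rw [← Real.log_sqrt (Nat.cast_nonneg n), Real.exp_log (Real.sqrt_pos.mpr (by linarith))]
    calc (Small.card : ℝ) ≤ (1+x)^(C'.card) * q^(t-1) := hstep
      _ ≤ Real.exp ((C'.card : ℝ) * x) * Real.exp ((t : ℝ) * Real.log q) := by
          apply mul_le_mul hexp1 hexp2 (pow_nonneg hq0.le _) (Real.exp_nonneg _)
      _ ≤ Real.exp (Real.log n / 2) := hmono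
      _ = Real.sqrt n := hsqrt
  -- final assembly
  set Big := (Finset.univ \ C').filter (fun v => ¬ (D v).card < t) with hBdef
  have hsplit : Small.card + Big.card = (Finset.univ \ C').card :=
    Finset.card_filter_add_card_filter_not _
  have hcard_sdiff : (Finset.univ \ C').card = n - C'.card := by
    rw [Finset.card_sdiff_of_subset (Finset.subset_univ _), Finset.card_univ, Fintype.card_fin]
  have hkn : C'.card ≤ n := by
    calc C'.card ≤ (Finset.univ : Finset (Fin n)).card := Finset.card_le_card (Finset.subset_univ _)
      _ = n := by rw [Finset.card_univ, Fintype.card_fin]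
  have hsplitR : (Small.card : ℝ) + (Big.card : ℝ) = (n : ℝ) - (C'.card : ℝ) := by
    have := hsplit
    rw [hcard_sdiff] at this
    have h2 : ((Small.card + Big.card : ℕ) : ℝ) = ((n - C'.card : ℕ) : ℝ) := by exact_mod_cast this
    rw [Nat.cast_sub hkn] at h2
    push_cast at h2
    linarith
  have hbig : ((n:ℝ)/2) ≤ (Big.card : ℝ) := by
    have : M * Real.log n + Real.sqrt n ≤ (n:ℝ)/2 := hMn
    linarith
  have hbig_sum : (t:ℝ) * (Big.card : ℝ) ≤ ∑ v ∈ Finset.univ \ C', ((D v).card : ℝ) := by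
    calc (t:ℝ) * (Big.card : ℝ) = ∑ _v ∈ Big, (t:ℝ) := by rw [Finset.sum_const, nsmul_eq_mul]; ring
      _ ≤ ∑ v ∈ Big, ((D v).card : ℝ) := Finset.sum_le_sum (fun v hv => by
          have h := (Finset.mem_filter.mp hv).2
          push_neg at h
          exact_mod_cast h)
      _ ≤ ∑ v ∈ Finset.univ \ C', ((D v).card : ℝ) :=
          Finset.sum_le_sum_of_subset_of_nonneg (Finset.filter_subset _ _)
            (fun _ _ _ => Nat.cast_nonneg _)
  have hF_ge : (t:ℝ) * (Big.card : ℝ) ≤ (F.ncard : ℝ) := by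
    rw [hFcard]
    refine hbig_sum.trans ?_
    have : ((∑ v ∈ Finset.univ \ C', (D v).card : ℕ) : ℝ) ≤ (F'.card : ℝ) := by exact_mod_cast hsumF
    rw [Nat.cast_sum] at this
    exact this
  have ht : ε * Real.log n ≤ (t:ℝ) := Nat.le_ceil _
  calc ε/2 * n * Real.log n = (ε * Real.log n) * ((n:ℝ)/2) := by ring
    _ ≤ (t:ℝ) * (Big.card : ℝ) := mul_le_mul ht hbig (by positivity) (Nat.cast_nonneg t)
    _ ≤ (F.ncard : ℝ) := hF_ge
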